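/- In any group quotient of B'_n (n ≥ 5) in which the image of σ_2σ_1^{-1} has order dividing 2, one has the relation w̄^5 = 1 where w = σ_2σ_3σ_1^{-1}σ_2^{-1}, using the Gorin–Lin relations c_1 = uwu and uwu = w^2c_1^{-1}w. -/

import Mathlib

/-- Relators of the Artin presentation of the braid group on `n` strands.
Generator `i : Fin (n-1)` corresponds to the Artin generator `σ_{i+1}`. -/
def braidRels (n : ℕ) : Set (FreeGroup (Fin (n - 1))) :=
  {r | (∃ i j : Fin (n - 1), (i : ℕ) + 1 = (j : ℕ) ∧
          r = .of i * .of j * .of i * (.of j * .of i * .of j)⁻¹) ∨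
       (∃ i j : Fin (n - 1), (i : ℕ) + 2 ≤ (j : ℕ) ∧
          r = .of i * .of j * (.of j * .of i)⁻¹)}

/-- The braid group on `n` strands. -/
def BraidGroup (n : ℕ) : Type := PresentedGroup (braidRels n)

instance (n : ℕ) : Group (BraidGroup n) := by unfold BraidGroup; infer_instance

/-- `sig n i` is the Artin generator `σ_i` (1-based: `1 ≤ i ≤ n-1`), and `1` otherwise. -/
def sig (n : ℕ) (i : ℕ) : BraidGroup n :=
  if h : 1 ≤ i ∧ i ≤ n - 1 then PresentedGroup.of ⟨i - 1, by omega⟩ else 1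

/-- The exponent sum homomorphism `B_n → ℤ`, sending each Artin generator to `1`. -/
def expSum (n : ℕ) : BraidGroup n →* Multiplicative ℤ :=
  PresentedGroup.toGroup (f := fun _ : Fin (n - 1) => Multiplicative.ofAdd (1 : ℤ))
    (by
      rintro r (⟨i, j, -, rfl⟩ | ⟨i, j, -, rfl⟩) <;>
        simp only [map_mul, map_inv, FreeGroup.lift_apply_of] <;> group)

/-- The Birman–Ko–Lee generator `ρ_{ij}`:
the half twist `(σ_{j-1} ⋯ σ_{i+1}) σ_i (σ_{j-1} ⋯ σ_{i+1})⁻¹`. -/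
def rho (n i j : ℕ) : BraidGroup n :=
  (((List.range' (i + 1) (j - 1 - i)).reverse.map (sig n)).prod) * sig n i *
    (((List.range' (i + 1) (j - 1 - i)).reverse.map (sig n)).prod)⁻¹

section WordLemmas

variable {G : Type*} [Group G] (a b c : G)
variable (hA : a * b * a = b * a * b) (hB : b * c * b = c * b * c) (hC : a * c = c * a)
include hA hB hC

theorem word_P1 : (c * b⁻¹)⁻¹ = (a*b*c*(a*b*a)⁻¹) * (b*a⁻¹) * (a*b*c*(a*b*a)⁻¹)⁻¹ := by
  calc _ = b * (c⁻¹) := by group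
    _ = (b * (c⁻¹)) * (a * c) * (c⁻¹ * (a⁻¹)) := by group
    _ = (b * (c⁻¹)) * (c * a) * (c⁻¹ * (a⁻¹)) := by rw [hC]
    _ = b * (a * (c⁻¹ * (a⁻¹))) := by group
    _ = (b * (a * (c⁻¹))) * (b * c * b) * (b⁻¹ * (c⁻¹ * (b⁻¹ * (a⁻¹)))) := by group
    _ = (b * (a * (c⁻¹))) * (c * b * c) * (b⁻¹ * (c⁻¹ * (b⁻¹ * (a⁻¹)))) := by rw [hB]
    _ = b * (a * (b * (c * (b⁻¹ * (c⁻¹ * (b⁻¹ * (a⁻¹))))))) := by group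
    _ = (b * (a * (b * (c * (b⁻¹ * (a⁻¹ * (b⁻¹))))))) * (a * b * a) * (a⁻¹ * (b⁻¹ * (a⁻¹ * (b * (a * (c⁻¹ * (b⁻¹ * (a⁻¹)))))))) := by group
    _ = (b * (a * (b * (c * (b⁻¹ * (a⁻¹ * (b⁻¹))))))) * (b * a * b) * (a⁻¹ * (b⁻¹ * (a⁻¹ * (b * (a * (c⁻¹ * (b⁻¹ * (a⁻¹)))))))) := by rw [hA]
    _ = b * (a * (b * (c * (a⁻¹ * (b⁻¹ * (a⁻¹ * (b * (a * (c⁻¹ * (b⁻¹ * (a⁻¹))))))))))) := by group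
    _ = (b * (a * (b * (c * (a⁻¹ * (a⁻¹ * (b⁻¹ * (a⁻¹)))))))) * (a * b * a) * (b⁻¹ * (a⁻¹ * (b * (a * (c⁻¹ * (b⁻¹ * (a⁻¹))))))) := by group
    _ = (b * (a * (b * (c * (a⁻¹ * (a⁻¹ * (b⁻¹ * (a⁻¹)))))))) * (b * a * b) * (b⁻¹ * (a⁻¹ * (b * (a * (c⁻¹ * (b⁻¹ * (a⁻¹))))))) := by rw [hA]
    _ = b * (a * (b * (c * (a⁻¹ * (a⁻¹ * (b⁻¹ * (a⁻¹ * (b * (b * (a * (c⁻¹ * (b⁻¹ * (a⁻¹))))))))))))) := by group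
    _ = (b * (a * (b * (a⁻¹)))) * (a * c) * (a⁻¹ * (a⁻¹ * (b⁻¹ * (a⁻¹ * (b * (b * (a * (c⁻¹ * (b⁻¹ * (a⁻¹)))))))))) := by group
    _ = (b * (a * (b * (a⁻¹)))) * (c * a) * (a⁻¹ * (a⁻¹ * (b⁻¹ * (a⁻¹ * (b * (b * (a * (c⁻¹ * (b⁻¹ * (a⁻¹)))))))))) := by rw [hC]
    _ = b * (a * (b * (a⁻¹ * (c * (a⁻¹ * (b⁻¹ * (a⁻¹ * (b * (b * (a * (c⁻¹ * (b⁻¹ * (a⁻¹))))))))))))) := by group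
    _ = ((1 : G)) * (b * a * b) * (a⁻¹ * (c * (a⁻¹ * (b⁻¹ * (a⁻¹ * (b * (b * (a * (c⁻¹ * (b⁻¹ * (a⁻¹))))))))))) := by group
    _ = ((1 : G)) * (a * b * a) * (a⁻¹ * (c * (a⁻¹ * (b⁻¹ * (a⁻¹ * (b * (b * (a * (c⁻¹ * (b⁻¹ * (a⁻¹))))))))))) := by rw [hA]
    _ = a * (b * (c * (a⁻¹ * (b⁻¹ * (a⁻¹ * (b * (b * (a * (c⁻¹ * (b⁻¹ * (a⁻¹))))))))))) := by group
    _ = _ := by group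

theorem word_P2 : (b*a⁻¹)⁻¹ * (b*c*a⁻¹*b⁻¹) * (b*a⁻¹) = c*a⁻¹ := by
  calc _ = a * (c * (a⁻¹ * (a⁻¹))) := by group
    _ = ((1 : G)) * (a * c) * (a⁻¹ * (a⁻¹)) := by group
    _ = ((1 : G)) * (c * a) * (a⁻¹ * (a⁻¹)) := by rw [hC]
    _ = c * (a⁻¹) := by group
    _ = _ := by group

theorem word_P3 : (b*a⁻¹) * (b*c*a⁻¹*b⁻¹) * (b*a⁻¹)⁻¹ = (b*c*a⁻¹*b⁻¹)^2 * (c*a⁻¹)⁻¹ * (b*c*a⁻¹*b⁻¹) := by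
  calc _ = b * (a⁻¹ * (b * (c * (a⁻¹ * (b⁻¹ * (a * (b⁻¹))))))) := by group
    _ = (b * (a⁻¹ * (b * (c * (a⁻¹ * (b⁻¹)))))) * (a * b * a) * (a⁻¹ * (b⁻¹ * (b⁻¹))) := by group
    _ = (b * (a⁻¹ * (b * (c * (a⁻¹ * (b⁻¹)))))) * (b * a * b) * (a⁻¹ * (b⁻¹ * (b⁻¹))) := by rw [hA]
    _ = b * (a⁻¹ * (b * (c * (b * (a⁻¹ * (b⁻¹ * (b⁻¹))))))) := by group
    _ = (b * (a⁻¹ * (b * (c * (b * (a⁻¹ * (b⁻¹))))))) * (a * b * a) * (a⁻¹ * (b⁻¹ * (a⁻¹ * (b⁻¹)))) := by group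
    _ = (b * (a⁻¹ * (b * (c * (b * (a⁻¹ * (b⁻¹))))))) * (b * a * b) * (a⁻¹ * (b⁻¹ * (a⁻¹ * (b⁻¹)))) := by rw [hA]
    _ = b * (a⁻¹ * (b * (c * (b * (b * (a⁻¹ * (b⁻¹ * (a⁻¹ * (b⁻¹))))))))) := by group
    _ = (b * (a⁻¹ * (b * (c * (b * (b * (a⁻¹ * (c⁻¹)))))))) * (a * c) * (c⁻¹ * (a⁻¹ * (c * (b⁻¹ * (a⁻¹ * (b⁻¹)))))) := by group
    _ = (b * (a⁻¹ * (b * (c * (b * (b * (a⁻¹ * (c⁻¹)))))))) * (c * a) * (c⁻¹ * (a⁻¹ * (c * (b⁻¹ * (a⁻¹ * (b⁻¹)))))) := by rw [hC]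
    _ = b * (a⁻¹ * (b * (c * (b * (b * (c⁻¹ * (a⁻¹ * (c * (b⁻¹ * (a⁻¹ * (b⁻¹))))))))))) := by group
    _ = (b * (a⁻¹ * (b * (c * (b * (b * (c⁻¹ * (a⁻¹ * (c * (b⁻¹ * (c⁻¹ * (b⁻¹)))))))))))) * (c * b * c) * (c⁻¹ * (b⁻¹ * (c⁻¹ * (b * (c * (a⁻¹ * (b⁻¹))))))) := by group
    _ = (b * (a⁻¹ * (b * (c * (b * (b * (c⁻¹ * (a⁻¹ * (c * (b⁻¹ * (c⁻¹ * (b⁻¹)))))))))))) * (b * c * b) * (c⁻¹ * (b⁻¹ * (c⁻¹ * (b * (c * (a⁻¹ * (b⁻¹))))))) := by rw [hB]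
    _ = b * (a⁻¹ * (b * (c * (b * (b * (c⁻¹ * (a⁻¹ * (b⁻¹ * (c⁻¹ * (b * (c * (a⁻¹ * (b⁻¹))))))))))))) := by group
    _ = (b * (a⁻¹ * (b * (c * (b * (b * (c⁻¹ * (b⁻¹ * (a⁻¹ * (b⁻¹)))))))))) * (b * a * b) * (a⁻¹ * (b⁻¹ * (c⁻¹ * (b * (c * (a⁻¹ * (b⁻¹))))))) := by group
    _ = (b * (a⁻¹ * (b * (c * (b * (b * (c⁻¹ * (b⁻¹ * (a⁻¹ * (b⁻¹)))))))))) * (a * b * a) * (a⁻¹ * (b⁻¹ * (c⁻¹ * (b * (c * (a⁻¹ * (b⁻¹))))))) := by rw [hA]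
    _ = b * (a⁻¹ * (b * (c * (b * (b * (c⁻¹ * (b⁻¹ * (a⁻¹ * (b⁻¹ * (a * (c⁻¹ * (b * (c * (a⁻¹ * (b⁻¹))))))))))))))) := by group
    _ = (b * (a⁻¹ * (b * (c * (b * (c⁻¹ * (b⁻¹))))))) * (b * c * b) * (c⁻¹ * (b⁻¹ * (a⁻¹ * (b⁻¹ * (a * (c⁻¹ * (b * (c * (a⁻¹ * (b⁻¹)))))))))) := by group
    _ = (b * (a⁻¹ * (b * (c * (b * (c⁻¹ * (b⁻¹))))))) * (c * b * c) * (c⁻¹ * (b⁻¹ * (a⁻¹ * (b⁻¹ * (a * (c⁻¹ * (b * (c * (a⁻¹ * (b⁻¹)))))))))) := by rw [hB]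
    _ = b * (a⁻¹ * (b * (c * (b * (c⁻¹ * (b⁻¹ * (c * (a⁻¹ * (b⁻¹ * (a * (c⁻¹ * (b * (c * (a⁻¹ * (b⁻¹))))))))))))))) := by group
    _ = (b * (a⁻¹)) * (b * c * b) * (c⁻¹ * (b⁻¹ * (c * (a⁻¹ * (b⁻¹ * (a * (c⁻¹ * (b * (c * (a⁻¹ * (b⁻¹))))))))))) := by group
    _ = (b * (a⁻¹)) * (c * b * c) * (c⁻¹ * (b⁻¹ * (c * (a⁻¹ * (b⁻¹ * (a * (c⁻¹ * (b * (c * (a⁻¹ * (b⁻¹))))))))))) := by rw [hB]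
    _ = b * (a⁻¹ * (c * (c * (a⁻¹ * (b⁻¹ * (a * (c⁻¹ * (b * (c * (a⁻¹ * (b⁻¹))))))))))) := by group
    _ = (b * (c * (a⁻¹ * (c⁻¹)))) * (c * a) * (c⁻¹ * (a⁻¹ * (c * (c * (a⁻¹ * (b⁻¹ * (a * (c⁻¹ * (b * (c * (a⁻¹ * (b⁻¹)))))))))))) := by group
    _ = (b * (c * (a⁻¹ * (c⁻¹)))) * (a * c) * (c⁻¹ * (a⁻¹ * (c * (c * (a⁻¹ * (b⁻¹ * (a * (c⁻¹ * (b * (c * (a⁻¹ * (b⁻¹)))))))))))) := by rw [hC]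
    _ = b * (c * (a⁻¹ * (c * (a⁻¹ * (b⁻¹ * (a * (c⁻¹ * (b * (c * (a⁻¹ * (b⁻¹))))))))))) := by group
    _ = _ := by simp only [pow_two]; group

theorem word_P4 : (b*c*a⁻¹*b⁻¹) * (c*a⁻¹) = (b*c*a⁻¹*b⁻¹) * (c*b⁻¹)^2 * (b*c*a⁻¹*b⁻¹)⁻¹ * (b*a⁻¹)^2 := by
  calc _ = b * (c * (a⁻¹ * (b⁻¹ * (c * (a⁻¹))))) := by group
    _ = (b * (c * (a⁻¹ * (b⁻¹ * (c * (b⁻¹)))))) * (a * c) * (c⁻¹ * (a⁻¹ * (b * (a⁻¹)))) := by group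
    _ = (b * (c * (a⁻¹ * (b⁻¹ * (c * (b⁻¹)))))) * (c * a) * (c⁻¹ * (a⁻¹ * (b * (a⁻¹)))) := by rw [hC]
    _ = b * (c * (a⁻¹ * (b⁻¹ * (c * (b⁻¹ * (c * (a * (c⁻¹ * (a⁻¹ * (b * (a⁻¹))))))))))) := by group
    _ = _ := by simp only [pow_two]; group

end WordLemmas


section Pentagon

variable {G : Type*} [Group G]

private theorem abel_eq {A : Type*} [CommGroup A] {x y : A} (h : x * y * x = y * x * y) :
    x = y :=
  mul_left_cancel (a := x * y) (h.trans (by rw [mul_comm x y]))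

theorem pentagon (a b c : G)
    (hA : a * b * a = b * a * b) (hB : b * c * b = c * b * c) (hC : a * c = c * a)
    (hu : (b * a⁻¹) ^ 2 = 1) : (b * c * a⁻¹ * b⁻¹) ^ 5 = 1 := by
  have hP1 := word_P1 a b c hA hB hC
  have ht2 : (c * b⁻¹) ^ 2 = 1 := by
    calc (c * b⁻¹) ^ 2 = ((c * b⁻¹)⁻¹ * (c * b⁻¹)⁻¹)⁻¹ := by simp only [pow_two]; group
      _ = ((a*b*c*(a*b*a)⁻¹) * (b*a⁻¹) * (a*b*c*(a*b*a)⁻¹)⁻¹ *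
            ((a*b*c*(a*b*a)⁻¹) * (b*a⁻¹) * (a*b*c*(a*b*a)⁻¹)⁻¹))⁻¹ := by rw [hP1]
      _ = (a*b*c*(a*b*a)⁻¹) * ((b*a⁻¹) ^ 2)⁻¹ * (a*b*c*(a*b*a)⁻¹)⁻¹ := by
            simp only [pow_two]; group
      _ = 1 := by rw [hu]; group
  have hwc : (b*c*a⁻¹*b⁻¹) * (c*a⁻¹) = 1 := by
    rw [word_P4 a b c hA hB hC, ht2, hu]; group
  have hCw : c*a⁻¹ = (b*c*a⁻¹*b⁻¹)⁻¹ := by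
    calc c*a⁻¹ = (b*c*a⁻¹*b⁻¹)⁻¹ * ((b*c*a⁻¹*b⁻¹) * (c*a⁻¹)) := by group
      _ = (b*c*a⁻¹*b⁻¹)⁻¹ := by rw [hwc, mul_one]
  have e2 := word_P2 a b c hA hB hC
  have e3 := word_P3 a b c hA hB hC
  have huinv : (b*a⁻¹)⁻¹ = b*a⁻¹ := by
    refine inv_eq_of_mul_eq_one_left ?_
    rw [← pow_two]; exact hu
  rw [huinv] at e2 e3
  have hE : (b*c*a⁻¹*b⁻¹)⁻¹ = (b*c*a⁻¹*b⁻¹)^2 * ((b*c*a⁻¹*b⁻¹)⁻¹)⁻¹ * (b*c*a⁻¹*b⁻¹) := by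
    rw [hCw] at e2 e3
    exact e2.symm.trans e3
  calc (b*c*a⁻¹*b⁻¹) ^ 5
      = ((b*c*a⁻¹*b⁻¹)^2 * ((b*c*a⁻¹*b⁻¹)⁻¹)⁻¹ * (b*c*a⁻¹*b⁻¹)) * (b*c*a⁻¹*b⁻¹) := by
        simp only [pow_two, pow_succ, pow_zero, one_mul]; group
    _ = (b*c*a⁻¹*b⁻¹)⁻¹ * (b*c*a⁻¹*b⁻¹) := by rw [← hE]
    _ = 1 := by group

end Pentagon

section BraidLemmas

theorem sig_def {n i : ℕ} (h1 : 1 ≤ i) (h2 : i ≤ n - 1) :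
    sig n i = PresentedGroup.of (⟨i - 1, by omega⟩ : Fin (n - 1)) := dif_pos ⟨h1, h2⟩

theorem braid_rel_one {n : ℕ} {r : FreeGroup (Fin (n - 1))} (hr : r ∈ braidRels n) :
    PresentedGroup.mk (braidRels n) r = 1 :=
  (QuotientGroup.eq_one_iff r).2 (Subgroup.subset_normalClosure hr)

theorem braid_adj {n : ℕ} (i j : Fin (n - 1)) (hij : (i : ℕ) + 1 = (j : ℕ)) :
    (PresentedGroup.of i : BraidGroup n) * PresentedGroup.of j * PresentedGroup.of i =
      PresentedGroup.of j * PresentedGroup.of i * PresentedGroup.of j := by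
  have h := braid_rel_one (n := n) (Or.inl ⟨i, j, hij, rfl⟩)
  simp only [map_mul, map_inv, mul_inv_eq_one] at h
  exact h

theorem braid_comm {n : ℕ} (i j : Fin (n - 1)) (hij : (i : ℕ) + 2 ≤ (j : ℕ)) :
    (PresentedGroup.of i : BraidGroup n) * PresentedGroup.of j =
      PresentedGroup.of j * PresentedGroup.of i := by
  have h := braid_rel_one (n := n) (Or.inr ⟨i, j, hij, rfl⟩)
  simp only [map_mul, map_inv, mul_inv_eq_one] at h
  exact h

theorem sig_braid {n : ℕ} {i : ℕ} (h1 : 1 ≤ i) (h2 : i + 1 ≤ n - 1) :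
    sig n i * sig n (i + 1) * sig n i = sig n (i + 1) * sig n i * sig n (i + 1) := by
  rw [sig_def h1 (by omega), sig_def (by omega : 1 ≤ i + 1) h2]
  exact braid_adj _ _ (by simp; omega)

theorem sig_comm {n : ℕ} {i j : ℕ} (h1 : 1 ≤ i) (h : i + 2 ≤ j) (h2 : j ≤ n - 1) :
    sig n i * sig n j = sig n j * sig n i := by
  rw [sig_def h1 (by omega), sig_def (by omega : 1 ≤ j) h2]
  exact braid_comm _ _ (by simp; omega)

theorem expSum_sig {n i : ℕ} (h1 : 1 ≤ i) (h2 : i ≤ n - 1) :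
    expSum n (sig n i) = Multiplicative.ofAdd (1 : ℤ) := by
  rw [sig_def h1 h2]
  exact PresentedGroup.toGroup.of _

theorem mem_commutator_of_expSum {n : ℕ} (hn : 5 ≤ n) {x : BraidGroup n}
    (hx : expSum n x = 1) : x ∈ commutator (BraidGroup n) := by
  have h0 : (0 : ℕ) < n - 1 := by omega
  have hgen : ∀ i : Fin (n - 1),
      Abelianization.of (PresentedGroup.of i : BraidGroup n) =
        Abelianization.of (PresentedGroup.of (⟨0, h0⟩ : Fin (n - 1))) := by
    have key : ∀ k (hk : k < n - 1),
        Abelianization.of (PresentedGroup.of (⟨k, hk⟩ : Fin (n - 1)) : BraidGroup n) =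
          Abelianization.of (PresentedGroup.of (⟨0, h0⟩ : Fin (n - 1))) := by
      intro k
      induction k with
      | zero => intro hk; rfl
      | succ m ih =>
        intro hk
        have hm : m < n - 1 := by omega
        have hrel := braid_adj (n := n) ⟨m, hm⟩ ⟨m + 1, hk⟩ (by simp)
        have h2 := congrArg Abelianization.of hrel
        simp only [map_mul] at h2
        exact (abel_eq h2).symm.trans (ih hm)
    intro i
    obtain ⟨k, hk⟩ := i
    exact key k hk
  have hz : Abelianization.of x ∈
      Subgroup.zpowers (Abelianization.of (PresentedGroup.of (⟨0, h0⟩ : Fin (n - 1)) :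
        BraidGroup n)) := by
    refine PresentedGroup.generated_by (braidRels n)
      (Subgroup.comap Abelianization.of (Subgroup.zpowers _)) ?_ x
    intro j
    simp only [Subgroup.mem_comap]
    rw [hgen j]
    exact Subgroup.mem_zpowers _
  obtain ⟨k, hk⟩ := hz
  have hg0 : expSum n (PresentedGroup.of (⟨0, h0⟩ : Fin (n - 1)) : BraidGroup n) =
      Multiplicative.ofAdd (1 : ℤ) := PresentedGroup.toGroup.of _
  have hψ := congrArg (Abelianization.lift (expSum n)) hk
  replace hψ := (map_zpow (Abelianization.lift (expSum n))
    (Abelianization.of (PresentedGroup.of (⟨0, h0⟩ : Fin (n - 1)) : BraidGroup n)) k).symm.trans hψ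
  have hψ' : (expSum n (PresentedGroup.of (⟨0, h0⟩ : Fin (n - 1)) : BraidGroup n)) ^ k
      = expSum n x := hψ
  rw [hg0, hx] at hψ'
  have hk0 : k = 0 := by
    have := congrArg Multiplicative.toAdd hψ'
    simpa using this
  have hk1 : Abelianization.of x = 1 := by
    have hz0 : Abelianization.of (PresentedGroup.of (⟨0, h0⟩ : Fin (n - 1)) : BraidGroup n)
        ^ (0 : ℤ) = Abelianization.of x := by rw [← hk0]; exact hk
    rw [zpow_zero] at hz0
    exact hz0.symm
  exact (QuotientGroup.eq_one_iff x).1 hk1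

end BraidLemmas

/-- In any quotient of B'_n (n ≥ 5) in which the image of σ₂σ₁⁻¹ has order dividing 2,
the image of w = σ₂σ₃σ₁⁻¹σ₂⁻¹ satisfies w̄⁵ = 1. -/
theorem w_pow_five_eq_one (n : ℕ) (hn : 5 ≤ n) {G : Type*} [Group G]
    (q : ↥(commutator (BraidGroup n)) →* G) (hq : Function.Surjective q)
    (hu : ∀ a : ↥(commutator (BraidGroup n)),
      (a : BraidGroup n) = sig n 2 * (sig n 1)⁻¹ → (q a) ^ 2 = 1) :
    ∀ w : ↥(commutator (BraidGroup n)),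
      (w : BraidGroup n) = sig n 2 * sig n 3 * (sig n 1)⁻¹ * (sig n 2)⁻¹ →
      (q w) ^ 5 = 1 := by
  intro w hw
  -- braid relations
  have hA : sig n 1 * sig n 2 * sig n 1 = sig n 2 * sig n 1 * sig n 2 :=
    sig_braid (by omega) (by omega)
  have hB : sig n 2 * sig n 3 * sig n 2 = sig n 3 * sig n 2 * sig n 3 :=
    sig_braid (by omega) (by omega)
  have hC : sig n 1 * sig n 3 = sig n 3 * sig n 1 :=
    sig_comm (by omega) (by omega) (by omega)
  have hC14 : sig n 1 * sig n 4 = sig n 4 * sig n 1 :=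
    sig_comm (by omega) (by omega) (by omega)
  have hC24 : sig n 2 * sig n 4 = sig n 4 * sig n 2 :=
    sig_comm (by omega) (by omega) (by omega)
  set u₀ : BraidGroup n := sig n 2 * (sig n 1)⁻¹ with hu₀
  set w₀ : BraidGroup n := sig n 2 * sig n 3 * (sig n 1)⁻¹ * (sig n 2)⁻¹ with hw₀
  set N : Subgroup (BraidGroup n) := Subgroup.normalClosure {u₀ ^ 2} with hN
  -- Step 1: w₀^5 lies in the normal closure of u₀²
  have hmemN : w₀ ^ 5 ∈ N := by
    have hu2N : u₀ ^ 2 ∈ N := Subgroup.subset_normalClosure rfl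
    have hQ := pentagon (QuotientGroup.mk' N (sig n 1)) (QuotientGroup.mk' N (sig n 2))
      (QuotientGroup.mk' N (sig n 3))
      (by rw [← map_mul, ← map_mul, ← map_mul, ← map_mul, hA])
      (by rw [← map_mul, ← map_mul, ← map_mul, ← map_mul, hB])
      (by rw [← map_mul, ← map_mul, hC])
      (by
        rw [← map_inv, ← map_mul, ← map_pow]
        exact (QuotientGroup.eq_one_iff _).2 hu2N)
    rw [← map_inv, ← map_inv, ← map_mul, ← map_mul, ← map_mul, ← map_pow] at hQ
    exact (QuotientGroup.eq_one_iff _).1 hQ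
  -- Step 2: everything in N is in the commutator subgroup and killed by q
  have hS : ∀ x ∈ N, ∃ hx : x ∈ commutator (BraidGroup n), q ⟨x, hx⟩ = 1 := by
    intro x hxN
    rw [hN, Subgroup.normalClosure] at hxN
    refine Subgroup.closure_induction
      (p := fun y _ => ∃ hy : y ∈ commutator (BraidGroup n), q ⟨y, hy⟩ = 1)
      ?base ?one ?mul ?inv hxN
    case one =>
      exact ⟨one_mem _, by rw [show (⟨1, one_mem _⟩ : ↥(commutator (BraidGroup n))) = 1 from
        rfl, map_one]⟩
    case mul =>
      rintro y z - - ⟨hy, qy⟩ ⟨hz, qz⟩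
      refine ⟨mul_mem hy hz, ?_⟩
      rw [show (⟨y * z, mul_mem hy hz⟩ : ↥(commutator (BraidGroup n))) =
        ⟨y, hy⟩ * ⟨z, hz⟩ from rfl, map_mul, qy, qz, mul_one]
    case inv =>
      rintro y - ⟨hy, qy⟩
      refine ⟨inv_mem hy, ?_⟩
      rw [show (⟨y⁻¹, inv_mem hy⟩ : ↥(commutator (BraidGroup n))) = (⟨y, hy⟩)⁻¹ from rfl,
        map_inv, qy, inv_one]
    case base =>
      intro y hy
      obtain ⟨s, hs, hconj⟩ := Group.mem_conjugatesOfSet_iff.1 hy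
      rw [Set.mem_singleton_iff] at hs
      subst hs
      obtain ⟨g, hg⟩ := isConj_iff.1 hconj
      -- replace the conjugator g by one of exponent sum zero
      set e : ℤ := Multiplicative.toAdd (expSum n g) with he
      have hcomm4 : Commute ((sig n 4) ^ (-e)) (u₀ ^ 2) := by
        have c1 : Commute (sig n 4) (sig n 2) := hC24.symm
        have c2 : Commute (sig n 4) ((sig n 1)⁻¹) :=
          (show Commute (sig n 4) (sig n 1) from hC14.symm).inv_right
        exact (((c1.mul_right c2).pow_right 2).zpow_left (-e))
      set g' : BraidGroup n := g * (sig n 4) ^ (-e) with hg'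
      have hgy : g' * u₀ ^ 2 * g'⁻¹ = y := by
        rw [← hg, hg']
        calc g * sig n 4 ^ (-e) * u₀ ^ 2 * (g * sig n 4 ^ (-e))⁻¹
            = g * (sig n 4 ^ (-e) * u₀ ^ 2 * (sig n 4 ^ (-e))⁻¹) * g⁻¹ := by group
          _ = g * (u₀ ^ 2 * sig n 4 ^ (-e) * (sig n 4 ^ (-e))⁻¹) * g⁻¹ := by rw [hcomm4.eq]
          _ = g * u₀ ^ 2 * g⁻¹ := by group
      have hu₀mem : u₀ ∈ commutator (BraidGroup n) := by
        refine mem_commutator_of_expSum hn ?_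
        rw [hu₀, map_mul, map_inv, expSum_sig (by omega) (by omega),
          expSum_sig (by omega) (by omega), mul_inv_cancel]
      have hg'mem : g' ∈ commutator (BraidGroup n) := by
        refine mem_commutator_of_expSum hn ?_
        rw [hg', map_mul, map_zpow, expSum_sig (by omega : (1:ℕ) ≤ 4) (by omega)]
        have : expSum n g = Multiplicative.ofAdd e := by rw [he]; exact (ofAdd_toAdd _).symm
        rw [this]
        apply Multiplicative.toAdd.injective
        simp
      have hymem : y ∈ commutator (BraidGroup n) := by
        rw [← hgy]
        exact mul_mem (mul_mem hg'mem (pow_mem hu₀mem 2)) (inv_mem hg'mem)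
      refine ⟨hymem, ?_⟩
      have hsub : (⟨y, hymem⟩ : ↥(commutator (BraidGroup n))) =
          ⟨g', hg'mem⟩ * (⟨u₀, hu₀mem⟩ : ↥(commutator (BraidGroup n))) ^ 2 * (⟨g', hg'mem⟩)⁻¹ := by
        apply Subtype.ext
        simp only [Subgroup.coe_mul, SubgroupClass.coe_pow, InvMemClass.coe_inv]
        exact hgy.symm
      rw [hsub, map_mul, map_mul, map_pow, map_inv, hu ⟨u₀, hu₀mem⟩ rfl, mul_one,
        mul_inv_cancel]
  obtain ⟨hmem, hq1⟩ := hS _ hmemN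
  have hw5 : w ^ 5 = (⟨w₀ ^ 5, hmem⟩ : ↥(commutator (BraidGroup n))) := by
    apply Subtype.ext
    rw [SubgroupClass.coe_pow, hw]
  calc (q w) ^ 5 = q (w ^ 5) := (map_pow q w 5).symm
    _ = 1 := by rw [hw5, hq1]
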